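/- Let S be a subset of E(ℚ̄) having property (P), and let f be an endomorphism of E defined over ℚ(S) of degree greater than 1 with f(S) ⊆ S. Then f has only finitely many preperiodic points in S. -/

import Mathlib

open WeierstrassCurve WeierstrassCurve.Affine

open scoped Classical

noncomputable section

variable {K : Type*} [Field K]

def inField {W : WeierstrassCurve.Affine K} (F : Subfield K) : W.Point → Prop
  | .zero => True
  | @Point.some _ _ _ x y _ => x ∈ F ∧ y ∈ F

def HasNorthcott {α : Type*} (ht : α → ℝ) (S : Set α) : Prop :=
  ∀ T : ℝ, 0 < T → {P ∈ S | ht P ≤ T}.Finite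

structure IsogenyLike (W : WeierstrassCurve.Affine K) where
  hom : W.Point →+ W.Point
  deg : ℕ
  deg_pos : 0 < deg
  card_fiber : ∀ Q : W.Point, Nat.card {P : W.Point // hom P = Q} = deg

def coordsOf {W : WeierstrassCurve.Affine K} (S : Set W.Point) : Set K :=
  {c | ∃ x y : K, ∃ h : W.Nonsingular x y, Point.some x y h ∈ S ∧ (c = x ∨ c = y)}

def defField (W : WeierstrassCurve.Affine K) (S : Set W.Point) : Subfield K :=
  Subfield.closure ({W.a₁, W.a₂, W.a₃, W.a₄, W.a₆} ∪ coordsOf S)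

def DefinedOver {W : WeierstrassCurve.Affine K} (f : IsogenyLike W) (F : Subfield K) : Prop :=
  ∀ P : W.Point, inField F P → inField F (f.hom P)

def HasPropP {W : WeierstrassCurve.Affine K} (S : Set W.Point) : Prop :=
  ∀ Γ : Set W.Point, Γ ⊆ S → Γ.Infinite →
    ∀ f : IsogenyLike W, DefinedOver f (defField W S) → f.hom '' Γ = Γ → f.deg = 1

theorem exists_invariant_infinite {α : Type*} (g : α → α) (S : Set α)
    (hgS : ∀ x ∈ S, g x ∈ S) (hfib : ∀ q : α, {p : α | g p = q}.Finite)
    (hA : {P ∈ S | ∃ n : ℕ, 0 < n ∧ ∃ m : ℕ, 0 < m ∧ g^[m] (g^[n] P) = g^[n] P}.Infinite) :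
    ∃ Γ : Set α, Γ ⊆ S ∧ Γ.Infinite ∧ g '' Γ = Γ := by
  classical
  set A := {P ∈ S | ∃ n : ℕ, 0 < n ∧ ∃ m : ℕ, 0 < m ∧ g^[m] (g^[n] P) = g^[n] P} with hAdef
  have hiterS : ∀ x ∈ S, ∀ k, g^[k] x ∈ S := by
    intro x hx k
    induction k with
    | zero => simpa
    | succ k ih => rw [Function.iterate_succ_apply']; exact hgS _ ih
  have hAS : A ⊆ S := fun x hx => hx.1
  have hAiter : ∀ x ∈ A, ∀ k, g^[k] x ∈ A := by
    rintro x ⟨hxS, n, hn, m, hm, hx⟩ k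
    refine ⟨hiterS x hxS k, n, hn, m, hm, ?_⟩
    have e : g^[n] (g^[k] x) = g^[k] (g^[n] x) := by
      rw [← Function.iterate_add_apply, ← Function.iterate_add_apply, Nat.add_comm]
    rw [e, ← Function.iterate_add_apply, Nat.add_comm m k, Function.iterate_add_apply, hx]
  by_cases hPS : {x ∈ S | ∃ m : ℕ, 0 < m ∧ g^[m] x = x}.Infinite
  · refine ⟨_, fun x hx => hx.1, hPS, Set.Subset.antisymm ?_ ?_⟩
    · rintro x ⟨y, ⟨hyS, m, hm, hy⟩, rfl⟩
      refine ⟨hgS y hyS, m, hm, ?_⟩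
      rw [← Function.iterate_succ_apply, Function.iterate_succ_apply', hy]
    · rintro x ⟨hxS, m, hm, hx⟩
      refine ⟨g^[m-1] x, ⟨hiterS x hxS (m-1), m, hm, ?_⟩, ?_⟩
      · rw [← Function.iterate_add_apply, Nat.add_comm, Function.iterate_add_apply, hx]
      · have e1 : g^[m-1+1] x = g (g^[m-1] x) := Function.iterate_succ_apply' g (m-1) x
        rw [← e1, Nat.sub_add_cancel hm, hx]
  · -- periodic points in S form a finite set
    rw [Set.not_infinite] at hPS
    set T : α → Set α := fun x => {z ∈ A | ∃ n : ℕ, g^[n] z = x} with hTdef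
    have hcover : A ⊆ ⋃ p ∈ {x ∈ S | ∃ m : ℕ, 0 < m ∧ g^[m] x = x}, T p := by
      rintro a ⟨haS, n, hn, m, hm, ha⟩
      exact Set.mem_biUnion ⟨hiterS a haS n, m, hm, ha⟩ ⟨⟨haS, n, hn, m, hm, ha⟩, n, rfl⟩
    obtain ⟨p, hpmem, hTp⟩ :
        ∃ p ∈ {x ∈ S | ∃ m : ℕ, 0 < m ∧ g^[m] x = x}, (T p).Infinite := by
      by_contra hc
      push_neg at hc
      exact hA ((hPS.biUnion (fun w hw => hc w hw)).subset hcover)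
    obtain ⟨hpS, mp, hmp, hp⟩ := hpmem
    set C : Set α := Set.range (fun k => g^[k] p) with hCdef
    have hmod : ∀ q r : ℕ, g^[mp * q + r] p = g^[r] p := by
      intro q r
      induction q with
      | zero => simp
      | succ q ih =>
        have e : mp * (q + 1) + r = (mp * q + r) + mp := by ring
        rw [e, Function.iterate_add_apply, hp, ih]
    have hCfin : C.Finite := by
      refine ((Set.finite_Iio mp).image (fun k => g^[k] p)).subset ?_
      rintro c ⟨k, rfl⟩
      refine ⟨k % mp, Nat.mod_lt _ hmp, ?_⟩
      show g^[k % mp] p = g^[k] p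
      conv_rhs => rw [← Nat.div_add_mod k mp]
      exact (hmod _ _).symm
    have hCg : ∀ c ∈ C, g c ∈ C := by
      rintro c ⟨k, rfl⟩
      refine ⟨k + 1, ?_⟩
      exact Function.iterate_succ_apply' g k p
    have hCpull : ∀ y : α, (∃ m : ℕ, 0 < m ∧ g^[m] y = y) → g y ∈ C → y ∈ C := by
      rintro y ⟨m, hm, hy⟩ ⟨k, hk⟩
      have hk' : g^[k] p = g y := hk
      refine ⟨m - 1 + k, ?_⟩
      show g^[m-1+k] p = y
      have e1 : g^[m-1+1] y = g^[m-1] (g y) := Function.iterate_succ_apply g (m-1) y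
      rw [Function.iterate_add_apply, hk', ← e1, Nat.sub_add_cancel hm, hy]
    set Y : Set α := {y | y ∈ A ∧ g y ∈ C ∧ y ∉ C} with hYdef
    have hYfin : Y.Finite := by
      refine ((hCfin.biUnion (fun c _ => hfib c)).subset ?_ : Y.Finite)
      rintro y ⟨hyA, hyC, hyC'⟩
      exact Set.mem_biUnion hyC rfl
    have hYnper : ∀ y ∈ Y, ¬ (∃ m : ℕ, 0 < m ∧ g^[m] y = y) := by
      rintro y ⟨hyA, hygC, hyC⟩ hper
      exact hyC (hCpull y hper hygC)
    have hNcov : T p \ C ⊆ ⋃ y ∈ Y, T y := by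
      rintro z ⟨⟨hzA, n₀, hz₀⟩, hzC⟩
      have hex : ∃ n, g^[n] z ∈ C := ⟨n₀, by rw [hz₀]; exact ⟨0, rfl⟩⟩
      set n := Nat.find hex with hn
      have hn0 : n ≠ 0 := by
        intro h
        have := Nat.find_spec hex
        rw [← hn, h] at this
        exact hzC this
      have hgy : g (g^[n-1] z) ∈ C := by
        have e1 : g^[n-1+1] z = g (g^[n-1] z) := Function.iterate_succ_apply' g (n-1) z
        rw [← e1, Nat.sub_add_cancel (Nat.pos_of_ne_zero hn0)]
        exact Nat.find_spec hex
      have hynC : g^[n-1] z ∉ C := Nat.find_min hex (Nat.sub_lt (Nat.pos_of_ne_zero hn0) one_pos)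
      exact Set.mem_biUnion ⟨hAiter z hzA (n-1), hgy, hynC⟩ ⟨hzA, n - 1, rfl⟩
    obtain ⟨y₀, hy₀Y, hTy₀⟩ : ∃ y ∈ Y, (T y).Infinite := by
      by_contra hc
      push_neg at hc
      exact (hTp.diff hCfin) ((hYfin.biUnion (fun w hw => hc w hw)).subset hNcov)
    -- the step lemma
    have step : ∀ y : α, y ∈ A → ¬ (∃ m : ℕ, 0 < m ∧ g^[m] y = y) → (T y).Infinite →
        ∃ w : α, (w ∈ A ∧ ¬ (∃ m : ℕ, 0 < m ∧ g^[m] w = w) ∧ (T w).Infinite) ∧ g w = y := by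
      intro y hyA hyper hTy
      have h1 : (T y \ {y}).Infinite := hTy.diff (Set.finite_singleton y)
      have hcov : T y \ {y} ⊆ ⋃ w ∈ {w : α | g w = y} ∩ A, T w := by
        rintro z ⟨⟨hzA, n, hz⟩, hzy⟩
        have hn : n ≠ 0 := by
          rintro rfl
          exact hzy hz
        have hgw : g (g^[n-1] z) = y := by
          have e1 : g^[n-1+1] z = g (g^[n-1] z) := Function.iterate_succ_apply' g (n-1) z
          rw [← e1, Nat.sub_add_cancel (Nat.pos_of_ne_zero hn), hz]
        exact Set.mem_biUnion ⟨hgw, hAiter z hzA (n-1)⟩ ⟨hzA, n - 1, rfl⟩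
      have hffin : ({w : α | g w = y} ∩ A).Finite := (hfib y).subset Set.inter_subset_left
      obtain ⟨w, hwmem, hTw⟩ : ∃ w ∈ {w : α | g w = y} ∩ A, (T w).Infinite := by
        by_contra hc
        push_neg at hc
        exact h1 ((hffin.biUnion (fun w hw => hc w hw)).subset hcov)
      refine ⟨w, ⟨hwmem.2, ?_, hTw⟩, hwmem.1⟩
      rintro ⟨m, hm, hw⟩
      refine hyper ⟨m, hm, ?_⟩
      rw [← hwmem.1, ← Function.iterate_succ_apply, Function.iterate_succ_apply', hw]
    -- build the backward chain
    have hy₀per := hYnper y₀ hy₀Y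
    have hy₀A := hy₀Y.1
    let σ := {y : α // y ∈ A ∧ ¬ (∃ m : ℕ, 0 < m ∧ g^[m] y = y) ∧ (T y).Infinite}
    have step' : ∀ s : σ, ∃ t : σ, g t.1 = s.1 := by
      rintro ⟨y, hyA, hyper, hTy⟩
      obtain ⟨w, hw, hgw⟩ := step y hyA hyper hTy
      exact ⟨⟨w, hw⟩, hgw⟩
    choose F hF using step'
    set seq : ℕ → σ := fun i => F^[i] ⟨y₀, hy₀A, hy₀per, hTy₀⟩ with hseq
    have hstep : ∀ i, g (seq (i+1)).1 = (seq i).1 := by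
      intro i
      have : seq (i+1) = F (seq i) := Function.iterate_succ_apply' F i _
      rw [this]
      exact hF (seq i)
    have hback : ∀ i d, g^[d] (seq (i+d)).1 = (seq i).1 := by
      intro i d
      induction d with
      | zero => rfl
      | succ d ih =>
        rw [Function.iterate_succ_apply]
        have : i + (d + 1) = (i + d) + 1 := by ring
        rw [this, hstep (i+d)]
        exact ih
    have hinj : Function.Injective (fun i => (seq i).1) := by
      intro i j hij
      have hij' : (seq i).1 = (seq j).1 := hij
      by_contra hne
      rcases Nat.lt_or_ge i j with h | h
      · have := hback i (j - i)
        rw [Nat.add_sub_cancel' h.le] at this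
        exact (seq j).2.2.1 ⟨j - i, Nat.sub_pos_of_lt h, by rw [this, hij']⟩
      · have hlt : j < i := lt_of_le_of_ne h (Ne.symm hne)
        have := hback j (i - j)
        rw [Nat.add_sub_cancel' hlt.le] at this
        exact (seq i).2.2.1 ⟨i - j, Nat.sub_pos_of_lt hlt, by rw [this, ← hij']⟩
    refine ⟨Set.range (fun i => (seq i).1) ∪ Set.range (fun k => g^[k] (seq 0).1), ?_, ?_, ?_⟩
    · rintro x (⟨i, rfl⟩ | ⟨k, rfl⟩)
      · exact hAS (seq i).2.1
      · exact hiterS _ (hAS (seq 0).2.1) k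
    · exact (Set.infinite_range_of_injective hinj).mono Set.subset_union_left
    · apply Set.Subset.antisymm
      · rintro x ⟨w, (⟨i, rfl⟩ | ⟨k, rfl⟩), rfl⟩
        · cases i with
          | zero =>
            refine Or.inr ⟨1, ?_⟩
            rfl
          | succ i =>
            refine Or.inl ⟨i, ?_⟩
            exact (hstep i).symm
        · refine Or.inr ⟨k + 1, ?_⟩
          exact Function.iterate_succ_apply' g k _
      · rintro x (⟨i, rfl⟩ | ⟨k, rfl⟩)
        · refine ⟨(seq (i+1)).1, Or.inl ⟨i+1, rfl⟩, ?_⟩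
          exact hstep i
        · cases k with
          | zero =>
            refine ⟨(seq 1).1, Or.inl ⟨1, rfl⟩, ?_⟩
            exact hstep 0
          | succ k =>
            refine ⟨g^[k] (seq 0).1, Or.inr ⟨k, rfl⟩, ?_⟩
            exact (Function.iterate_succ_apply' g k _).symm

/-- Let S ⊆ E(ℚ̄) have property (P), and let f be an endomorphism of E defined
over ℚ(S) of degree greater than 1 with f(S) ⊆ S. Then f has only finitely many preperiodic
points in S (P is preperiodic if some iterate fⁿ(P), n > 0, is periodic). -/
theorem finitely_many_preperiodic_of_propP
    (E : WeierstrassCurve.Affine (AlgebraicClosure ℚ)) (hΔ : E.Δ ≠ 0)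
    (S : Set E.Point) (hS : HasPropP S)
    (f : IsogenyLike E) (hdeg : 1 < f.deg)
    (hdef : DefinedOver f (defField E S))
    (hfS : f.hom '' S ⊆ S) :
    {P ∈ S | ∃ n : ℕ, 0 < n ∧ ∃ m : ℕ, 0 < m ∧
      (⇑f.hom)^[m] ((⇑f.hom)^[n] P) = (⇑f.hom)^[n] P}.Finite := by
  rw [← Set.not_infinite]
  intro hA
  have hfib : ∀ q : E.Point, {p : E.Point | f.hom p = q}.Finite := by
    intro q
    have h : Nat.card {P : E.Point // f.hom P = q} ≠ 0 := by
      rw [f.card_fiber q]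
      omega
    have hfin : Finite {P : E.Point // f.hom P = q} := Nat.finite_of_card_ne_zero h
    exact Set.finite_coe_iff.mp hfin
  obtain ⟨Γ, hΓS, hΓinf, hΓ⟩ := exists_invariant_infinite (⇑f.hom) S
    (fun x hx => hfS ⟨x, hx, rfl⟩) hfib hA
  have := hS Γ hΓS hΓinf f hdef hΓ
  omega
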